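/- (The affine quiver variety X_0 is the Kleinian singularity of type A_{l−1}: algebraic content of the isomorphism X_0 ≅ ℂ²/(ℤ/lℤ).) The map (a,b) ↦ (a_1⋯a_l, b_1⋯b_l, a_1b_1) sends the zero fibre of the moment map into the hypersurface {(u,v,w) ∈ ℂ³ : uv = w^l}, and it is surjective onto this hypersurface: (i) if a_{j+1}b_{j+1} = a_jb_j for all j, then (a_1⋯a_l)·(b_1⋯b_l) = (a_1b_1)^l; (ii) for every (u,v,w) ∈ ℂ³ with uv = w^l there exists (a,b) ∈ ℂ^{2l} with a_{j+1}b_{j+1} = a_jb_j for all j, a_1⋯a_l = u, b_1⋯b_l = v and a_1b_1 = w. -/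

import Mathlib

/-- The affine quiver variety `X_0` is the Kleinian singularity of type `A_{l−1}`:
algebraic content of the isomorphism `X_0 ≅ ℂ²/(ℤ/lℤ)`.
The zero fibre of the moment map consists of tuples `(a, b)` with
`a_{j+1} b_{j+1} = a_j b_j` for all `j` (indices mod `l`).  The map
`(a,b) ↦ (a_1⋯a_l, b_1⋯b_l, a_1 b_1)` sends the zero fibre into the hypersurface
`{uv = w^l}` and is surjective onto it. -/
theorem kleinian_singularity_typeA (l : ℕ) [NeZero l] :
    (∀ a b : ZMod l → ℂ, (∀ j : ZMod l, a (j + 1) * b (j + 1) = a j * b j) →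
      (∏ j : ZMod l, a j) * (∏ j : ZMod l, b j) = (a 1 * b 1) ^ l) ∧
    (∀ u v w : ℂ, u * v = w ^ l →
      ∃ a b : ZMod l → ℂ, (∀ j : ZMod l, a (j + 1) * b (j + 1) = a j * b j) ∧
        (∏ j : ZMod l, a j) = u ∧ (∏ j : ZMod l, b j) = v ∧ a 1 * b 1 = w) := by
  constructor
  · intro a b h
    have step : ∀ (n : ℕ) (j : ZMod l), a (j + n) * b (j + n) = a j * b j := by
      intro n
      induction n with
      | zero => simp
      | succ n ih =>
        intro j
        have e : (j + ((n + 1 : ℕ) : ZMod l)) = (j + n) + 1 := by push_cast; ring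
        rw [e, h, ih]
    have key : ∀ j : ZMod l, a j * b j = a 1 * b 1 := by
      intro j
      have h1 : ((1 : ZMod l) + (((j - 1).val : ℕ) : ZMod l)) = j := by
        simp [ZMod.natCast_val, ZMod.cast_id]
      have := step (j - 1).val 1
      rw [h1] at this
      exact this
    calc (∏ j : ZMod l, a j) * ∏ j : ZMod l, b j
        = ∏ j : ZMod l, (a j * b j) := (Finset.prod_mul_distrib).symm
      _ = ∏ _j : ZMod l, (a 1 * b 1) := Finset.prod_congr rfl (fun j _ => key j)
      _ = (a 1 * b 1) ^ l := by
          simp [Finset.prod_const, Finset.card_univ, ZMod.card]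
  · intro u v w huv
    by_cases hw : w = 0
    · subst hw
      have huv0 : u = 0 ∨ v = 0 := by
        have : u * v = 0 := by simpa [zero_pow (NeZero.ne l)] using huv
        exact mul_eq_zero.mp this
      rcases huv0 with hu | hv
      · refine ⟨fun _ => 0, fun j => if j = 0 then v else 1, ?_, ?_, ?_, ?_⟩
        · intro j; simp
        · simp [hu, Finset.prod_const, Finset.card_univ, ZMod.card,
            zero_pow (NeZero.ne l)]
        · simp
        · simp
      · refine ⟨fun j => if j = 0 then u else 1, fun _ => 0, ?_, ?_, ?_, ?_⟩
        · intro j; simp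
        · simp
        · simp [hv, Finset.prod_const, Finset.card_univ, ZMod.card,
            zero_pow (NeZero.ne l)]
        · simp
    · have hwl : w ^ l ≠ 0 := pow_ne_zero _ hw
      refine ⟨fun j => (if j = 0 then u / w ^ l else 1) * w,
        fun j => if j = 0 then v else 1, ?_, ?_, ?_, ?_⟩
      · have hab : ∀ j : ZMod l,
            ((if j = 0 then u / w ^ l else 1) * w) * (if j = 0 then v else 1) = w := by
          intro j
          by_cases hj : j = 0
          · simp only [hj, if_pos rfl, if_true]
            field_simp
            linear_combination huv
          · simp [hj]
        intro j
        simp only [hab]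
      · rw [Finset.prod_mul_distrib, Finset.prod_const, Finset.card_univ, ZMod.card]
        simp [div_mul_cancel₀ u hwl]
      · simp
      · by_cases h1 : (1 : ZMod l) = 0
        · simp only [h1, if_pos rfl, if_true]
          field_simp
          linear_combination huv
        · simp [h1]
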